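/- For every infinite cardinal κ, the hedgehog with κ needles X = {(x_α)_{α<κ} ∈ [0,1]^κ : at most one coordinate x_α is nonzero}, with the subspace topology from the product [0,1]^κ, satisfies Sln(X) = c(X) = w(X) = κ. -/

import Mathlib

open Set Cardinal TopologicalSpace Topology

universe u

/-- The Suslinian number of a continuum `X`: the supremum of the cardinalities of
pairwise disjoint families of non-degenerate subcontinua of `X`. -/
noncomputable def SlnC (X : Type u) [TopologicalSpace X] : Cardinal.{u} :=
  ⨆ 𝒞 : {𝒞 : Set (Set X) //
      (∀ C ∈ 𝒞, IsCompact C ∧ IsConnected C ∧ C.Nontrivial) ∧ 𝒞.PairwiseDisjoint id},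
    #(𝒞.1)

/-- The Suslinian number of a Tychonoff space `X`: the minimum of the Suslinian numbers
of continua containing a homeomorphic copy of `X`. -/
noncomputable def Sln (X : Type u) [TopologicalSpace X] : Cardinal.{u} :=
  sInf {κ : Cardinal.{u} | ∃ (Y : Type u) (_ : TopologicalSpace Y),
    CompactSpace Y ∧ T2Space Y ∧ ConnectedSpace Y ∧
    (∃ e : X → Y, IsEmbedding e) ∧ SlnC Y = κ}

/-- The weight of a topological space: the minimal cardinality of a base. -/
noncomputable def tweight (X : Type u) [TopologicalSpace X] : Cardinal.{u} :=
  sInf {κ : Cardinal.{u} | ∃ B : Set (Set X), IsTopologicalBasis B ∧ #B = κ}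

/-- The Suslin (cellularity) number: the supremum of the cardinalities of pairwise
disjoint families of non-empty open sets. -/
noncomputable def suslinNumber (X : Type u) [TopologicalSpace X] : Cardinal.{u} :=
  ⨆ 𝒰 : {𝒰 : Set (Set X) // (∀ U ∈ 𝒰, IsOpen U ∧ U.Nonempty) ∧ 𝒰.PairwiseDisjoint id},
    #(𝒰.1)

/-- The density of a space: the minimal cardinality of a dense subset. -/
noncomputable def densityCard (X : Type u) [TopologicalSpace X] : Cardinal.{u} :=
  sInf {κ : Cardinal.{u} | ∃ D : Set X, Dense D ∧ #D = κ}

/-- The Lindelöf number of a space: the least `κ` such that every open cover admits a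
subcover of cardinality at most `κ`. -/
noncomputable def lindelofNum (X : Type u) [TopologicalSpace X] : Cardinal.{u} :=
  sInf {κ : Cardinal.{u} | ∀ 𝒰 : Set (Set X), (∀ U ∈ 𝒰, IsOpen U) → ⋃₀ 𝒰 = Set.univ →
    ∃ 𝒱 ⊆ 𝒰, #𝒱 ≤ κ ∧ ⋃₀ 𝒱 = Set.univ}

/-- The hereditary Lindelöf number: the supremum of the Lindelöf numbers of subspaces. -/
noncomputable def hLindelofNum (X : Type u) [TopologicalSpace X] : Cardinal.{u} :=
  ⨆ Y : Set X, lindelofNum ↥Y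

/-- A space is zero-dimensional if it has a base of clopen sets. -/
def IsZeroDim (X : Type u) [TopologicalSpace X] : Prop :=
  ∃ B : Set (Set X), IsTopologicalBasis B ∧ ∀ U ∈ B, IsClopen U

/-- A continuum is Suslinian if every pairwise disjoint family of non-degenerate
subcontinua is countable. -/
def IsSuslinianSpace (X : Type u) [TopologicalSpace X] : Prop :=
  ∀ 𝒞 : Set (Set X), (∀ C ∈ 𝒞, IsCompact C ∧ IsConnected C ∧ C.Nontrivial) →
    𝒞.PairwiseDisjoint id → 𝒞.Countable

/-- `T` is a `κ`-Suslin tree: a tree (the strict predecessors of each node are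
well-ordered) of height `κ` having no chains and no antichains of cardinality `κ`. -/
def IsSuslinTree (κ : Cardinal.{u}) (T : Type u) [PartialOrder T] : Prop :=
  ∃ h : ∀ t : T, IsWellOrder {s : T // s < t} (· < ·),
    (⨆ t : T, Order.succ (@Ordinal.type {s : T // s < t} (· < ·) (h t))) = κ.ord ∧
    (∀ C : Set T, IsChain (· ≤ ·) C → #C < κ) ∧
    (∀ A : Set T, IsAntichain (· ≤ ·) A → #A < κ)

/-- The rim-weight: the minimum over bases `B` of `sup_{U ∈ B} w(∂U)`. -/
noncomputable def rimWeight (X : Type u) [TopologicalSpace X] : Cardinal.{u} :=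
  sInf {κ : Cardinal.{u} | ∃ B : Set (Set X), IsTopologicalBasis B ∧
    (⨆ U : B, tweight ↥(frontier (U : Set X))) = κ}

/-- The covering dimension of `X` is at most `n`: every finite open cover has a finite
open refinement in which no point belongs to more than `n + 1` members. -/
def CovDimLE (X : Type u) [TopologicalSpace X] (n : ℕ) : Prop :=
  ∀ 𝒰 : Set (Set X), (∀ U ∈ 𝒰, IsOpen U) → ⋃₀ 𝒰 = Set.univ → 𝒰.Finite →
    ∃ 𝒱 : Set (Set X), 𝒱.Finite ∧ (∀ V ∈ 𝒱, IsOpen V) ∧ ⋃₀ 𝒱 = Set.univ ∧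
      (∀ V ∈ 𝒱, ∃ U ∈ 𝒰, V ⊆ U) ∧
      ∀ x : X, {V ∈ 𝒱 | x ∈ V}.ncard ≤ n + 1

/-- The Vietoris topology on the collection of all subsets of `X`, generated by the sets
`{F | F ⊆ U}` and `{F | F ∩ U ≠ ∅}` for `U` open. -/
def vietorisTop (X : Type u) [TopologicalSpace X] : TopologicalSpace (Set X) :=
  TopologicalSpace.generateFrom
    (((fun U => {F : Set X | F ⊆ U}) '' {U : Set X | IsOpen U}) ∪
     ((fun U => {F : Set X | (F ∩ U).Nonempty}) '' {U : Set X | IsOpen U}))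

/-- The hyperspace `exp_c(X)` of subcontinua of `X` with the Vietoris topology. -/
def expc (X : Type u) [TopologicalSpace X] : Type u :=
  {C : Set X // IsCompact C ∧ IsConnected C}

instance expc.topologicalSpace (X : Type u) [TopologicalSpace X] :
    TopologicalSpace (expc X) :=
  TopologicalSpace.induced Subtype.val (vietorisTop X)

/-- A map between continua is atomic if it is monotone and its restriction to the
preimage of any non-degenerate subcontinuum `Z` of `Y` is an irreducible map onto `Z`
(no proper closed subset of `f ⁻¹ Z` maps onto `Z`). -/
def IsAtomicMap {X Y : Type u} [TopologicalSpace X] [TopologicalSpace Y] (f : X → Y) : Prop :=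
  (∀ y : Y, IsConnected (f ⁻¹' {y})) ∧
  ∀ Z : Set Y, IsCompact Z → IsConnected Z → Z.Nontrivial →
    ∀ A : Set X, IsClosed A → A ⊆ f ⁻¹' Z → f '' A = Z → A = f ⁻¹' Z

/-- An atomic map is `I`-atomic if each of its fibers is a singleton or an arc. -/
def IsIAtomicMap {X Y : Type u} [TopologicalSpace X] [TopologicalSpace Y] (f : X → Y) : Prop :=
  IsAtomicMap f ∧
  ∀ y : Y, (∃ x, f ⁻¹' {y} = {x}) ∨ Nonempty (↥(f ⁻¹' {y}) ≃ₜ unitInterval)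

/-- `X` is homeomorphic to the inverse limit of the inverse system `(Z, π)`. -/
def HomeoToInvLimit (X : Type u) [TopologicalSpace X] {ι : Type u} [Preorder ι]
    (Z : ι → Type u) (tZ : ∀ α, TopologicalSpace (Z α))
    (π : ∀ α β : ι, α ≤ β → Z β → Z α) : Prop :=
  haveI := tZ
  Nonempty (X ≃ₜ {z : ∀ α, Z α // ∀ (α β : ι) (h : α ≤ β), π α β h (z β) = z α})

abbrev Hset (ι : Type u) : Set (ι → unitInterval) :=
  {x : ι → unitInterval | {i : ι | x i ≠ 0}.Subsingleton}
variable {ι : Type u}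
open Classical in
noncomputable def nd (i : ι) (t : unitInterval) : ι → unitInterval :=
  fun j => if j = i then t else 0
lemma nd_apply_self (i : ι) (t : unitInterval) : nd i t i = t := by simp [nd]
lemma nd_apply_ne {i j : ι} (h : j ≠ i) (t : unitInterval) : nd i t j = 0 := by simp [nd, h]
lemma nd_mem (i : ι) (t : unitInterval) : nd i t ∈ Hset ι := by
  intro j hj k hk
  have hj' : j = i := by by_contra h; exact hj (nd_apply_ne h t)
  have hk' : k = i := by by_contra h; exact hk (nd_apply_ne h t)
  rw [hj', hk']
lemma nd_zero (i : ι) : nd i 0 = 0 := by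
  funext j; by_cases h : j = i <;> simp [nd, h]
lemma continuous_nd (i : ι) : Continuous (nd i) := by
  apply continuous_pi
  intro j
  by_cases h : j = i
  · subst h; simpa [nd] using continuous_id'
  · simp only [nd, if_neg h]; exact continuous_const

lemma nd_eq {x : ι → unitInterval} (hx : x ∈ Hset ι) {i : ι} (hi : x i ≠ 0) :
    nd i (x i) = x := by
  funext j
  by_cases h : j = i
  · subst h; exact nd_apply_self j (x j)
  · rw [nd_apply_ne h]
    by_contra hxj
    exact h (hx (Ne.symm hxj) hi)

noncomputable def hpt (i : ι) (t : unitInterval) : ↥(Hset ι) := ⟨nd i t, nd_mem i t⟩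

lemma continuous_hpt (i : ι) : Continuous (hpt i) :=
  (continuous_nd i).subtype_mk _

noncomputable def ptR (i : ι) (r : ℝ) : ↥(Hset ι) :=
  hpt i (Set.projIcc 0 1 zero_le_one r)

lemma continuous_ptR (i : ι) : Continuous (ptR i) :=
  (continuous_hpt i).comp continuous_projIcc

lemma ptR_val_self {i : ι} {r : ℝ} (h0 : 0 ≤ r) (h1 : r ≤ 1) :
    ((ptR i r).val i : ℝ) = r := by
  rw [ptR, hpt]
  show ((nd i (Set.projIcc 0 1 zero_le_one r) i : unitInterval) : ℝ) = r
  rw [nd_apply_self, Set.projIcc_of_mem zero_le_one ⟨h0, h1⟩]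

lemma ptR_eq_of_val {x : ↥(Hset ι)} {i : ι} {r : ℝ} (h0 : 0 < r) (h1 : r ≤ 1)
    (hx : ((x.val i : unitInterval) : ℝ) = r) : x = ptR i r := by
  have hne : x.val i ≠ 0 := by
    intro h; rw [h] at hx; simp at hx; exact absurd hx.symm (ne_of_gt h0)
  have hv : x.val i = Set.projIcc 0 1 zero_le_one r := by
    apply Subtype.ext
    rw [hx, Set.projIcc_of_mem zero_le_one ⟨le_of_lt h0, h1⟩]
  apply Subtype.ext
  rw [show (ptR i r).val = nd i (Set.projIcc 0 1 zero_le_one r) from rfl, ← hv]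
  exact (nd_eq x.2 hne).symm

/-- The open "upper half needle" sets. -/
def Vset (i : ι) : Set ↥(Hset ι) := {y | (1/2 : ℝ) < ((y.val i : unitInterval) : ℝ)}

lemma continuous_eval (i : ι) :
    Continuous (fun y : ↥(Hset ι) => ((y.val i : unitInterval) : ℝ)) :=
  continuous_subtype_val.comp ((continuous_apply i).comp continuous_subtype_val)

lemma isOpen_Vset (i : ι) : IsOpen (Vset (ι := ι) i) :=
  isOpen_lt continuous_const (continuous_eval i)

lemma ptR_one_mem_Vset (i : ι) : ptR i 1 ∈ Vset i := by
  show (1/2 : ℝ) < _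
  rw [ptR_val_self zero_le_one le_rfl]; norm_num

lemma val_ne_zero_of_mem_Vset {i : ι} {y : ↥(Hset ι)} (h : y ∈ Vset i) : y.val i ≠ 0 := by
  intro h0
  have h' : (1/2 : ℝ) < ((y.val i : unitInterval) : ℝ) := h
  rw [h0] at h'
  norm_num at h'

lemma disjoint_Vset {i j : ι} (h : i ≠ j) : Disjoint (Vset (ι := ι) i) (Vset j) := by
  rw [Set.disjoint_left]
  intro y hyi hyj
  exact h (y.2 (val_ne_zero_of_mem_Vset hyi) (val_ne_zero_of_mem_Vset hyj))

lemma ptR_one_not_mem_Vset {i j : ι} (h : i ≠ j) : ptR i 1 ∉ Vset j := by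
  intro hmem
  have := val_ne_zero_of_mem_Vset hmem
  exact this (nd_apply_ne (Ne.symm h) _)

lemma Vset_injective : Function.Injective (Vset (ι := ι)) := by
  intro i j hij
  by_contra hne
  exact ptR_one_not_mem_Vset hne (hij ▸ ptR_one_mem_Vset i)

/-- From an open nonempty set, extract a rational needle point. -/
lemma exists_rat_in_open {i : ι} {U : Set ↥(Hset ι)} (hU : IsOpen U) {t : ℝ}
    (h0 : 0 ≤ t) (h1 : t ≤ 1) (ht : ptR i t ∈ U) :
    ∃ q : ℚ, 0 < (q : ℝ) ∧ (q : ℝ) ≤ 1 ∧ ptR i (q : ℝ) ∈ U := by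
  have hW : IsOpen (ptR i ⁻¹' U) := hU.preimage (continuous_ptR i)
  obtain ⟨ε, hε, hball⟩ := Metric.isOpen_iff.mp hW t ht
  have hab : max (t - ε) 0 < min (t + ε) 1 := by
    apply max_lt <;> apply lt_min <;> linarith
  obtain ⟨q, hq1, hq2⟩ := exists_rat_btwn hab
  have hq0 : 0 < (q : ℝ) := lt_of_le_of_lt (le_max_right _ _) hq1
  have hqle : (q : ℝ) ≤ 1 := le_of_lt (lt_of_lt_of_le hq2 (min_le_right _ _))
  refine ⟨q, hq0, hqle, hball ?_⟩
  rw [Metric.mem_ball, Real.dist_eq, abs_lt]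
  constructor
  · have := lt_of_le_of_lt (le_max_left _ _) hq1; linarith
  · have := lt_of_lt_of_le hq2 (min_le_left _ _); linarith

lemma exists_ptR_of_isOpen [Nonempty ι] {U : Set ↥(Hset ι)} (hU : IsOpen U)
    (hne : U.Nonempty) :
    ∃ (i : ι) (q : ℚ), 0 < (q : ℝ) ∧ (q : ℝ) ≤ 1 ∧ ptR i (q : ℝ) ∈ U := by
  obtain ⟨p, hp⟩ := hne
  by_cases h : ∃ i, p.val i ≠ 0
  · obtain ⟨i, hi⟩ := h
    have h0 : (0:ℝ) < ((p.val i : unitInterval) : ℝ) := by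
      rcases lt_or_eq_of_le (unitInterval.nonneg (p.val i)) with h' | h'
      · exact h'
      · exact absurd (Subtype.ext h'.symm : p.val i = 0) hi
    have heq : p = ptR i ((p.val i : unitInterval) : ℝ) :=
      ptR_eq_of_val h0 (unitInterval.le_one _) rfl
    obtain ⟨q, hq0, hq1, hqU⟩ := exists_rat_in_open hU (le_of_lt h0)
      (unitInterval.le_one _) (heq ▸ hp)
    exact ⟨i, q, hq0, hq1, hqU⟩
  · push_neg at h
    have i : ι := Classical.arbitrary ι
    have heq : p = ptR i 0 := by
      apply Subtype.ext
      funext j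
      show p.val j = nd i (Set.projIcc 0 1 zero_le_one 0) j
      rw [Set.projIcc_of_mem zero_le_one ⟨le_rfl, zero_le_one⟩]
      have : (⟨(0:ℝ), ⟨le_rfl, zero_le_one⟩⟩ : unitInterval) = 0 := rfl
      rw [this]
      rw [show nd i (0 : unitInterval) j = 0 from by rw [nd_zero]; rfl]
      exact h j
    obtain ⟨q, hq0, hq1, hqU⟩ := exists_rat_in_open hU le_rfl zero_le_one (heq ▸ hp)
    exact ⟨i, q, hq0, hq1, hqU⟩

lemma exists_ptR_of_conn {C : Set ↥(Hset ι)} (hC : IsPreconnected C) (hnt : C.Nontrivial) :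
    ∃ (i : ι) (q : ℚ), 0 < (q : ℝ) ∧ (q : ℝ) ≤ 1 ∧ ptR i (q : ℝ) ∈ C := by
  obtain ⟨p, hp, p', hp', hne⟩ := hnt
  have hex : ∃ i, p.val i ≠ p'.val i := by
    by_contra h; push_neg at h
    exact hne (Subtype.ext (funext h))
  obtain ⟨i, hi⟩ := hex
  have key : ∀ a ∈ C, ∀ b ∈ C,
      ((a : ↥(Hset ι)).val i : ℝ) < ((b : ↥(Hset ι)).val i : ℝ) →
      ∃ (i : ι) (q : ℚ), 0 < (q : ℝ) ∧ (q : ℝ) ≤ 1 ∧ ptR i (q : ℝ) ∈ C := by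
    intro a ha b hb hab
    have hsub := hC.intermediate_value ha hb (continuous_eval i).continuousOn
    obtain ⟨q, hq1, hq2⟩ := exists_rat_btwn hab
    have hq0 : 0 < (q : ℝ) := lt_of_le_of_lt (unitInterval.nonneg _) hq1
    have hqle : (q : ℝ) ≤ 1 := le_of_lt (lt_of_lt_of_le hq2 (unitInterval.le_one _))
    obtain ⟨y, hyC, hy⟩ := hsub ⟨le_of_lt hq1, le_of_lt hq2⟩
    exact ⟨i, q, hq0, hqle, (ptR_eq_of_val hq0 hqle hy) ▸ hyC⟩
  have hne' : ((p.val i : unitInterval) : ℝ) ≠ ((p'.val i : unitInterval) : ℝ) :=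
    fun h => hi (Subtype.ext h)
  rcases lt_or_gt_of_ne hne' with h | h
  · exact key p hp p' hp' h
  · exact key p' hp' p hp h

/-- Counting lemma: a disjoint family each of whose members contains a rational
needle point has cardinality at most `#ι`. -/
lemma card_le_of_witness [Infinite ι] {𝒮 : Set (Set ↥(Hset ι))}
    (hdisj : 𝒮.PairwiseDisjoint id)
    (h : ∀ S ∈ 𝒮, ∃ (i : ι) (q : ℚ), 0 < (q : ℝ) ∧ (q : ℝ) ≤ 1 ∧ ptR i (q : ℝ) ∈ S) :
    Cardinal.mk 𝒮 ≤ #ι := by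
  have key : ∀ S : 𝒮, ∃ p : ι × ULift.{u} ℚ, ptR p.1 ((p.2.down : ℚ) : ℝ) ∈ S.1 := by
    intro S
    obtain ⟨i, q, _, _, hm⟩ := h S.1 S.2
    exact ⟨⟨i, ⟨q⟩⟩, hm⟩
  choose f hf using key
  have hinj : Function.Injective f := by
    intro S T hST
    apply Subtype.ext
    by_contra hne
    have hd := hdisj S.2 T.2 hne
    have h1 := hf S
    have h2 := hf T
    rw [← hST] at h2
    exact Set.disjoint_left.mp hd h1 h2
  calc #𝒮 ≤ #(ι × ULift.{u} ℚ) := mk_le_of_injective hinj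
    _ = #ι * #(ULift.{u} ℚ) := by rw [Cardinal.mk_prod, Cardinal.lift_id, Cardinal.lift_id]
    _ = #ι * ℵ₀ := by rw [Cardinal.mk_eq_aleph0 (ULift.{u} ℚ)]
    _ = #ι := mul_eq_left (aleph0_le_mk ι) (aleph0_le_mk ι) aleph0_ne_zero

/-- Upper halves of needles, as subsets of the hedgehog. -/
noncomputable def seg (i : ι) : Set ↥(Hset ι) := ptR i '' Set.Icc (1/2 : ℝ) 1

lemma seg_isCompact (i : ι) : IsCompact (seg (ι := ι) i) :=
  isCompact_Icc.image (continuous_ptR i)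

lemma seg_isConnected (i : ι) : IsConnected (seg (ι := ι) i) :=
  (isConnected_Icc (by norm_num)).image _ (continuous_ptR i).continuousOn

lemma seg_val_ne_zero {i : ι} {y : ↥(Hset ι)} (hy : y ∈ seg i) : y.val i ≠ 0 := by
  obtain ⟨r, hr, rfl⟩ := hy
  intro h0
  have : ((ptR i r).val i : ℝ) = r := ptR_val_self (by linarith [hr.1]) hr.2
  rw [h0] at this
  have : (0:ℝ) = r := this
  linarith [hr.1]

lemma ptR_one_mem_seg (i : ι) : ptR i 1 ∈ seg (ι := ι) i :=
  ⟨1, ⟨by norm_num, le_rfl⟩, rfl⟩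

lemma seg_nontrivial (i : ι) : (seg (ι := ι) i).Nontrivial := by
  refine ⟨ptR i (1/2), ⟨1/2, ⟨le_rfl, by norm_num⟩, rfl⟩, ptR i 1, ptR_one_mem_seg i, ?_⟩
  intro h
  have h1 : ((ptR i (1/2 : ℝ)).val i : ℝ) = 1/2 := ptR_val_self (by norm_num) (by norm_num)
  have h2 : ((ptR i (1 : ℝ)).val i : ℝ) = 1 := ptR_val_self zero_le_one le_rfl
  rw [h] at h1
  rw [h1] at h2
  norm_num at h2

lemma seg_disjoint {i j : ι} (h : i ≠ j) : Disjoint (seg (ι := ι) i) (seg j) := by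
  rw [Set.disjoint_left]
  intro y hyi hyj
  exact h (y.2 (seg_val_ne_zero hyi) (seg_val_ne_zero hyj))

lemma eq_of_ptR_one_mem_seg {i j : ι} (h : ptR i 1 ∈ seg (ι := ι) j) : i = j := by
  have h1 : (ptR i (1:ℝ)).val i ≠ 0 := by
    intro h0
    have := ptR_val_self (i := i) zero_le_one le_rfl
    rw [h0] at this
    have : (0:ℝ) = 1 := this
    norm_num at this
  exact (ptR i 1).2 h1 (seg_val_ne_zero h)

/-- Lower bound for the Suslinian number of any continuum containing the hedgehog. -/
lemma le_slnC {Y : Type u} [TopologicalSpace Y] (e : ↥(Hset ι) → Y)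
    (he : IsEmbedding e) : #ι ≤ SlnC Y := by
  classical
  set 𝒟 : Set (Set Y) := Set.range (fun i : ι => e '' seg i) with h𝒟
  have hprop : ∀ C ∈ 𝒟, IsCompact C ∧ IsConnected C ∧ C.Nontrivial := by
    rintro _ ⟨i, rfl⟩
    refine ⟨(seg_isCompact i).image he.continuous,
      (seg_isConnected i).image _ he.continuous.continuousOn, ?_⟩
    obtain ⟨a, ha, b, hb, hab⟩ := seg_nontrivial i
    exact ⟨e a, ⟨a, ha, rfl⟩, e b, ⟨b, hb, rfl⟩, fun hh => hab (he.injective hh)⟩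
  have hdisj : 𝒟.PairwiseDisjoint id := by
    rintro _ ⟨i, rfl⟩ _ ⟨j, rfl⟩ hne
    have hij : i ≠ j := fun h => hne (by rw [h])
    rw [Function.onFun, Set.disjoint_left]
    rintro _ ⟨a, ha, rfl⟩ ⟨b, hb, hba⟩
    rw [he.injective hba] at hb
    exact Set.disjoint_left.mp (seg_disjoint hij) ha hb
  have hinj : Function.Injective (fun i : ι => e '' seg i) := by
    intro i j hij
    have hij' : e '' seg i = e '' seg j := hij
    have h1 : e (ptR i 1) ∈ e '' seg j := by
      rw [← hij']; exact ⟨ptR i 1, ptR_one_mem_seg i, rfl⟩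
    obtain ⟨b, hb, hba⟩ := h1
    rw [he.injective hba] at hb
    exact eq_of_ptR_one_mem_seg hb
  have hcard : #𝒟 = #ι := Cardinal.mk_range_eq _ hinj
  rw [← hcard]
  exact le_ciSup (Cardinal.bddAbove_range _) (⟨𝒟, hprop, hdisj⟩ :
    {𝒞 : Set (Set Y) //
      (∀ C ∈ 𝒞, IsCompact C ∧ IsConnected C ∧ C.Nontrivial) ∧ 𝒞.PairwiseDisjoint id})

instance emptyFamilyNonempty {X : Type u} [TopologicalSpace X] :
    Nonempty {𝒞 : Set (Set X) //
      (∀ C ∈ 𝒞, IsCompact C ∧ IsConnected C ∧ C.Nontrivial) ∧ 𝒞.PairwiseDisjoint id} :=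
  ⟨⟨∅, fun C hC => absurd hC (Set.notMem_empty C), Set.pairwiseDisjoint_empty⟩⟩

instance emptyFamilyNonempty' {X : Type u} [TopologicalSpace X] :
    Nonempty {𝒰 : Set (Set X) //
      (∀ U ∈ 𝒰, IsOpen U ∧ U.Nonempty) ∧ 𝒰.PairwiseDisjoint id} :=
  ⟨⟨∅, fun C hC => absurd hC (Set.notMem_empty C), Set.pairwiseDisjoint_empty⟩⟩

lemma slnC_le [Infinite ι] : SlnC ↥(Hset ι) ≤ #ι := by
  apply ciSup_le'
  rintro ⟨𝒞, hprop, hdisj⟩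
  apply card_le_of_witness hdisj
  intro S hS
  exact exists_ptR_of_conn (hprop S hS).2.1.isPreconnected (hprop S hS).2.2

lemma slnC_eq [Infinite ι] : SlnC ↥(Hset ι) = #ι :=
  le_antisymm slnC_le (le_slnC id IsEmbedding.id)

lemma suslin_eq [Infinite ι] : suslinNumber ↥(Hset ι) = #ι := by
  apply le_antisymm
  · apply ciSup_le'
    rintro ⟨𝒰, hprop, hdisj⟩
    apply card_le_of_witness hdisj
    intro S hS
    exact exists_ptR_of_isOpen (hprop S hS).1 (hprop S hS).2
  · have hprop : ∀ U ∈ Set.range (Vset (ι := ι)), IsOpen U ∧ U.Nonempty := by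
      rintro _ ⟨i, rfl⟩
      exact ⟨isOpen_Vset i, ⟨ptR i 1, ptR_one_mem_Vset i⟩⟩
    have hdisj : (Set.range (Vset (ι := ι))).PairwiseDisjoint id := by
      rintro _ ⟨i, rfl⟩ _ ⟨j, rfl⟩ hne
      exact disjoint_Vset (fun h => hne (by rw [h]))
    have hcard : #(Set.range (Vset (ι := ι))) = #ι := Cardinal.mk_range_eq _ Vset_injective
    rw [← hcard]
    exact le_ciSup (Cardinal.bddAbove_range _) (⟨Set.range (Vset (ι := ι)), hprop, hdisj⟩ :
      {𝒰 : Set (Set ↥(Hset ι)) //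
        (∀ U ∈ 𝒰, IsOpen U ∧ U.Nonempty) ∧ 𝒰.PairwiseDisjoint id})

lemma basis_card_ge {B : Set (Set ↥(Hset ι))} (hB : IsTopologicalBasis B) : #ι ≤ #B := by
  have hex : ∀ i : ι, ∃ U : B, ptR i 1 ∈ (U : Set ↥(Hset ι)) ∧ (U : Set ↥(Hset ι)) ⊆ Vset i := by
    intro i
    obtain ⟨U, hUB, hmem, hsub⟩ :=
      hB.exists_subset_of_mem_open (ptR_one_mem_Vset i) (isOpen_Vset i)
    exact ⟨⟨U, hUB⟩, hmem, hsub⟩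
  choose f hf1 hf2 using hex
  have hinj : Function.Injective f := by
    intro i j hfij
    by_contra hne
    have : ptR i 1 ∈ Vset j := hf2 j (hfij ▸ hf1 i)
    exact ptR_one_not_mem_Vset hne this
  exact mk_le_of_injective hinj

lemma basis_exists [Infinite ι] :
    ∃ B : Set (Set ↥(Hset ι)), IsTopologicalBasis B ∧ #B ≤ #ι := by
  classical
  obtain ⟨b, hbc, -, hb⟩ := exists_countable_basis unitInterval
  haveI := hbc.to_subtype
  set P : Set (Set (ι → unitInterval)) :=
    {S | ∃ (U : ∀ _ : ι, Set unitInterval) (F : Finset ι),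
      (∀ i, i ∈ F → U i ∈ b) ∧ S = (F : Set ι).pi U} with hP_def
  have hP : IsTopologicalBasis P := isTopologicalBasis_pi fun _ => hb
  refine ⟨_, isTopologicalBasis_subtype hP (· ∈ Hset ι), ?_⟩
  have h1 : #(Set.preimage (Subtype.val (p := (· ∈ Hset ι))) '' P) ≤ #P :=
    Cardinal.mk_image_le
  have h2 : P ⊆ Set.range (fun p : Σ F : Finset ι, (F → b) =>
      (p.1 : Set ι).pi (fun i => if h : i ∈ p.1 then (p.2 ⟨i, h⟩ : Set unitInterval)
        else Set.univ)) := by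
    rintro S ⟨U, F, hU, rfl⟩
    refine ⟨⟨F, fun i => ⟨U i, hU i i.2⟩⟩, ?_⟩
    refine (Set.pi_congr rfl fun i hi => ?_).symm
    simp only [dif_pos (Finset.mem_coe.mp hi)]
  have h3 : #P ≤ #(Σ F : Finset ι, (F → b)) :=
    (Cardinal.mk_le_mk_of_subset h2).trans Cardinal.mk_range_le
  have h4 : #(Σ F : Finset ι, (F → b)) ≤ #ι := by
    calc #(Σ F : Finset ι, (F → b))
        = Cardinal.sum (fun F : Finset ι => #(F → b)) := Cardinal.mk_sigma _
      _ ≤ Cardinal.sum (fun _ : Finset ι => ℵ₀) :=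
          Cardinal.sum_le_sum _ _ (fun F => Cardinal.mk_le_aleph0)
      _ = #(Finset ι) * ℵ₀ := Cardinal.sum_const' _ _
      _ = #ι * ℵ₀ := by rw [Cardinal.mk_finset_of_infinite]
      _ = #ι := mul_eq_left (aleph0_le_mk ι) (aleph0_le_mk ι) aleph0_ne_zero
  exact h1.trans (h3.trans h4)

lemma tweight_eq [Infinite ι] : tweight ↥(Hset ι) = #ι := by
  obtain ⟨B, hB, hle⟩ := basis_exists (ι := ι)
  have hmem : #ι ∈ {κ : Cardinal.{u} | ∃ B : Set (Set ↥(Hset ι)),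
      IsTopologicalBasis B ∧ #B = κ} :=
    ⟨B, hB, le_antisymm hle (basis_card_ge hB)⟩
  apply le_antisymm
  · exact csInf_le (OrderBot.bddBelow _) hmem
  · refine le_csInf ⟨_, hmem⟩ ?_
    rintro μ ⟨B', hB', rfl⟩
    exact basis_card_ge hB'

lemma isClosed_Hset : IsClosed (Hset ι) := by
  rw [← isOpen_compl_iff, isOpen_iff_forall_mem_open]
  intro x hx
  have hx' : ¬ {i : ι | x i ≠ 0}.Subsingleton := hx
  obtain ⟨i, hi, j, hj, hij⟩ := Set.not_subsingleton_iff.mp hx'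
  refine ⟨{y : ι → unitInterval | y i ≠ 0} ∩ {y | y j ≠ 0}, ?_, ?_, ⟨hi, hj⟩⟩
  · rintro y ⟨h1, h2⟩ hyH
    exact hij (hyH h1 h2)
  · exact ((isOpen_compl_singleton).preimage (continuous_apply i)).inter
      ((isOpen_compl_singleton).preimage (continuous_apply j))

lemma isConnected_Hset [Nonempty ι] : IsConnected (Hset ι) := by
  have hcup : Hset ι = ⋃₀ Set.range (fun i : ι => Set.range (nd i)) := by
    ext x
    constructor
    · intro hx
      by_cases h : ∃ i, x i ≠ 0
      · obtain ⟨i, hi⟩ := h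
        exact ⟨_, ⟨i, rfl⟩, ⟨x i, nd_eq hx hi⟩⟩
      · push_neg at h
        refine ⟨_, ⟨Classical.arbitrary ι, rfl⟩, ⟨0, ?_⟩⟩
        rw [nd_zero]
        exact (funext h).symm
    · rintro ⟨_, ⟨i, rfl⟩, t, rfl⟩
      exact nd_mem i t
  constructor
  · exact ⟨nd (Classical.arbitrary ι) 0, nd_mem _ _⟩
  · rw [hcup]
    haveI : PreconnectedSpace unitInterval :=
      Subtype.preconnectedSpace (isPreconnected_Icc)
    apply isPreconnected_sUnion (0 : ι → unitInterval)
    · rintro _ ⟨i, rfl⟩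
      exact ⟨0, nd_zero i⟩
    · rintro _ ⟨i, rfl⟩
      exact isPreconnected_range (continuous_nd i)

lemma sln_eq [Infinite ι] : Sln ↥(Hset ι) = #ι := by
  haveI : CompactSpace ↥(Hset ι) :=
    isCompact_iff_compactSpace.mp (isClosed_Hset.isCompact)
  haveI : ConnectedSpace ↥(Hset ι) :=
    isConnected_iff_connectedSpace.mp isConnected_Hset
  have hmem : #ι ∈ {κ : Cardinal.{u} | ∃ (Y : Type u) (_ : TopologicalSpace Y),
      CompactSpace Y ∧ T2Space Y ∧ ConnectedSpace Y ∧
      (∃ e : ↥(Hset ι) → Y, IsEmbedding e) ∧ SlnC Y = κ} :=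
    ⟨↥(Hset ι), inferInstance, inferInstance, inferInstance, inferInstance,
      ⟨id, IsEmbedding.id⟩, slnC_eq⟩
  apply le_antisymm
  · exact csInf_le (OrderBot.bddBelow _) hmem
  · refine le_csInf ⟨_, hmem⟩ ?_
    rintro μ ⟨Y, tY, _, _, _, ⟨e, he⟩, rfl⟩
    exact le_slnC e he


/-- For every infinite cardinal `κ` (here `κ = #ι`), the hedgehog with `κ`
needles satisfies `Sln(X) = c(X) = w(X) = κ`. -/
theorem stmt_1 (ι : Type u) [Infinite ι] :
    Sln ↥{x : ι → unitInterval | {i : ι | x i ≠ 0}.Subsingleton} = #ι ∧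
    suslinNumber ↥{x : ι → unitInterval | {i : ι | x i ≠ 0}.Subsingleton} = #ι ∧
    tweight ↥{x : ι → unitInterval | {i : ι | x i ≠ 0}.Subsingleton} = #ι :=
  ⟨sln_eq, suslin_eq, tweight_eq⟩
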